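/- Given a refutation soup Z for φ in which every disjudgment except the initial one answers some question asked in Z, together with an addressing of Z, the model M constructed from Z (selecting syntax atoms according to φ, environment and goal atoms according to the judgments, question and answer atoms according to the soup structure, Y-atoms whenever some corresponding answer atom is selected, and not selecting F) is a stable model of the program P. -/

import Mathlib

namespace ASP

/-- A ground clause `head ← pos, ¬neg` of an answer set program. -/
structure GClause (α : Type) where
  head : α
  pos : List α
  neg : List α

variable {α : Type}

/-- Immediate-consequence operator of the Gelfond–Lifschitz reduct `P^M`:
`F(I) = I ∪ {a | some clause a ← a₁,…,aₙ of P^M has all aᵢ ∈ I}`. -/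
def tcons (P : Set (GClause α)) (M : Set α) : Set α →o Set α where
  toFun I := I ∪ {a | ∃ c ∈ P, c.head = a ∧ (∀ b ∈ c.pos, b ∈ I) ∧ (∀ b ∈ c.neg, b ∉ M)}
  monotone' := by
    intro I J h x hx
    rcases hx with hx | ⟨c, hc, h1, h2, h3⟩
    · exact Or.inl (h hx)
    · exact Or.inr ⟨c, hc, h1, fun b hb => h (h2 b hb), h3⟩

/-- The interpretation `I(P,M)`: least fixed point of the immediate-consequence
operator of the reduct `P^M`. -/
def interp (P : Set (GClause α)) (M : Set α) : Set α := OrderHom.lfp (tcons P M)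

/-- `M` is a stable model (answer set) of `P` iff `M = I(P,M)`. -/
def IsStable (P : Set (GClause α)) (M : Set α) : Prop := M = interp P M

end ASP
namespace MFOL

/-- Formulas of minimal first-order logic (→ and ∀ only, no function symbols),
in de Bruijn representation; individual terms are just variables `ℕ`. -/
inductive Form where
  | atom : ℕ → List ℕ → Form
  | imp : Form → Form → Form
  | all : Form → Form
deriving DecidableEq

def upRen (σ : ℕ → ℕ) : ℕ → ℕ
  | 0 => 0
  | n + 1 => σ n + 1

/-- Capture-avoiding (simultaneous) substitution of variables for variables. -/
def substF : (ℕ → ℕ) → Form → Form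
  | σ, .atom p args => .atom p (args.map σ)
  | σ, .imp a b => .imp (substF σ a) (substF σ b)
  | σ, .all a => .all (substF (upRen σ) a)

/-- Substitution of the variable `x` for the outermost bound variable. -/
def subst0 (x : ℕ) : Form → Form :=
  substF (fun n => match n with | 0 => x | n + 1 => n)

def shiftF : Form → Form := substF Nat.succ

/-- Natural deduction for minimal first-order logic. -/
inductive Prv : Set Form → Form → Prop
  | ax {Γ : Set Form} {φ : Form} : φ ∈ Γ → Prv Γ φ
  | impI {Γ : Set Form} {φ ψ : Form} : Prv (insert φ Γ) ψ → Prv Γ (.imp φ ψ)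
  | impE {Γ : Set Form} {φ ψ : Form} : Prv Γ (.imp φ ψ) → Prv Γ φ → Prv Γ ψ
  | allI {Γ : Set Form} {φ : Form} : Prv (shiftF '' Γ) φ → Prv Γ (.all φ)
  | allE {Γ : Set Form} {φ : Form} (x : ℕ) : Prv Γ (.all φ) → Prv Γ (subst0 x φ)

mutual
  /-- The Σ₁ class of the Mints hierarchy: Σ₁ ::= a | Π₁ → Σ₁. -/
  inductive IsSigma1 : Form → Prop
    | atom (p : ℕ) (args : List ℕ) : IsSigma1 (.atom p args)
    | imp {τ σ : Form} : IsPi1 τ → IsSigma1 σ → IsSigma1 (.imp τ σ)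
  /-- The Π₁ class of the Mints hierarchy: Π₁ ::= a | Σ₁ → Π₁ | ∀x.Π₁. -/
  inductive IsPi1 : Form → Prop
    | atom (p : ℕ) (args : List ℕ) : IsPi1 (.atom p args)
    | imp {σ π : Form} : IsSigma1 σ → IsPi1 π → IsPi1 (.imp σ π)
    | all {π : Form} : IsPi1 π → IsPi1 (.all π)
end

def IsAtomF (f : Form) : Prop := ∃ p args, f = Form.atom p args

/-- Premises τ₁,…,τ_q of a Σ₁ formula τ₁ → ⋯ → τ_q → c. -/
def premsOf : Form → List Form
  | .imp a b => a :: premsOf b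
  | .atom p args => []
  | .all a => []

/-- Target atom of a Σ₁ formula. -/
def targetOf : Form → Form
  | .imp _ b => targetOf b
  | f => f

/-- `Unfolds ψ prems b` : instantiating the ∀-blocks of the Π₁ formula
`ψ = ∀ȳ₁(σ₁ → ∀ȳ₂(σ₂ → ⋯ → ∀ȳ_k(σ_k → b')⋯))` at some variables x̄
yields the list of (instantiated) premises `prems = [σ₁[ȳ:=x̄],…]` and
the (instantiated) target atom `b = b'[ȳ:=x̄]`. -/
inductive Unfolds : Form → List Form → Form → Prop
  | atom (p : ℕ) (args : List ℕ) : Unfolds (.atom p args) [] (.atom p args)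
  | imp {σ ψ : Form} {prems : List Form} {b : Form} :
      Unfolds ψ prems b → Unfolds (.imp σ ψ) (σ :: prems) b
  | all {ψ : Form} {prems : List Form} {b : Form} (x : ℕ) :
      Unfolds (subst0 x ψ) prems b → Unfolds (.all ψ) prems b

/-- `closedAt k φ`: all free de Bruijn indices of `φ` are `< k`. -/
def closedAt : ℕ → Form → Prop
  | k, .atom _ args => ∀ x ∈ args, x < k
  | k, .imp a b => closedAt k a ∧ closedAt k b
  | k, .all a => closedAt (k + 1) a

end MFOL
namespace MFOL

/-- Subformula relation. -/
inductive SubfOf : Form → Form → Prop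
  | refl (φ : Form) : SubfOf φ φ
  | impL {χ a b : Form} : SubfOf χ a → SubfOf χ (.imp a b)
  | impR {χ a b : Form} : SubfOf χ b → SubfOf χ (.imp a b)
  | all {χ a : Form} : SubfOf χ a → SubfOf χ (.all a)

/-- Substitution instances of Π₁ subformulas of φ. -/
def Insts (φ : Form) : Set Form :=
  {τ | ∃ ψ, SubfOf ψ φ ∧ IsPi1 ψ ∧ ∃ σ : ℕ → ℕ, τ = substF σ ψ}

/-- An i-th answer in `Z` to the question challenging premise `σ`
asked at a disjudgment with environment `Γ`. -/
def IsAnswerOf (Z : Set (Set Form × Form)) (Γ : Set Form) (σ : Form) : Prop :=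
  ∃ z ∈ Z, z.2 = targetOf σ ∧ Γ ∪ {τ | τ ∈ premsOf σ} ⊆ z.1

/-- A refutation soup for φ: a set of disjudgments `Γ ⊬ a` containing the
initial disjudgment (the decomposition of φ) and such that every question
asked at a member of `Z` has some i-th answer in `Z`. -/
def IsSoup (φ : Form) (Z : Set (Set Form × Form)) : Prop :=
  ({τ | τ ∈ premsOf φ}, targetOf φ) ∈ Z ∧
  (∀ z ∈ Z, z.1 ⊆ Insts φ ∧ IsAtomF z.2) ∧
  (∀ z ∈ Z, ∀ ψ ∈ z.1, ∀ prems, Unfolds ψ prems z.2 → ∃ σ ∈ prems, IsAnswerOf Z z.1 σ)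

/-- Length of a formula. -/
def fsize : Form → ℕ
  | .atom _ args => 1 + args.length
  | .imp a b => fsize a + fsize b + 1
  | .all a => fsize a + 1

/-- Maximal arity of a predicate occurring in a formula. -/
def maxAr : Form → ℕ
  | .atom _ args => args.length
  | .imp a b => max (maxAr a) (maxAr b)
  | .all a => maxAr a

end MFOL
namespace MFOL

/-- Addresses: bit vectors (of length `n^r`). -/
abbrev Addr := List Bool

def addrLen (φ : Form) : ℕ := fsize φ ^ maxAr φ

def addr0 (φ : Form) : Addr := List.replicate (addrLen φ) false

def AddrOk (φ : Form) (ξ : Addr) : Prop := ξ.length = addrLen φ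

/-- Atoms of the answer-set program constructed from φ. -/
inductive PAt where
  | G : Form → Addr → PAt
  | E : Form → Addr → PAt
  | Ebar : Form → Addr → PAt
  | Q : Form → List Form → Form → Addr → PAt
  | A : ℕ → Form → List Form → Form → Addr → Addr → PAt
  | Abar : ℕ → Form → List Form → Form → Addr → Addr → PAt
  | Y : Form → List Form → Form → Addr → PAt
  | F : PAt

/-- Syntactic correctness of a question datum: ψ is an instance of a Π₁
subformula of φ and unfolds to the premises `prems` and target `tgt`. -/
def QOk (φ ψ : Form) (prems : List Form) (tgt : Form) : Prop :=
  ψ ∈ Insts φ ∧ Unfolds ψ prems tgt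

/-- The clauses of the answer-set program constructed from φ
('refutations into programs'): initialization facts at address 0…0,
answer-propagation clauses for environments and goals, choice clauses for
E/Ē and Aᵢ/Āᵢ, the question clause, totality clauses via Y and F, and
goal-uniqueness constraints. -/
inductive InSoupProg (φ : Form) : ASP.GClause PAt → Prop
  | initG : InSoupProg φ ⟨.G (targetOf φ) (addr0 φ), [], []⟩
  | initE {ψ} : ψ ∈ premsOf φ → InSoupProg φ ⟨.E ψ (addr0 φ), [], []⟩
  | initEbar {ψ} : ψ ∈ Insts φ → ψ ∉ premsOf φ →
      InSoupProg φ ⟨.Ebar ψ (addr0 φ), [], []⟩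
  | propE {i ψ prems tgt ξ η τ} : AddrOk φ ξ → AddrOk φ η → QOk φ ψ prems tgt →
      τ ∈ Insts φ →
      InSoupProg φ ⟨.E τ η, [.A i ψ prems tgt ξ η, .E τ ξ], []⟩
  | propD {i ψ prems tgt ξ η σ τ} : AddrOk φ ξ → AddrOk φ η → QOk φ ψ prems tgt →
      prems[i]? = some σ → τ ∈ premsOf σ →
      InSoupProg φ ⟨.E τ η, [.A i ψ prems tgt ξ η], []⟩
  | propG {i ψ prems tgt ξ η σ} : AddrOk φ ξ → AddrOk φ η → QOk φ ψ prems tgt →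
      prems[i]? = some σ →
      InSoupProg φ ⟨.G (targetOf σ) η, [.A i ψ prems tgt ξ η], []⟩
  | choiceE {ψ ξ} : ψ ∈ Insts φ → AddrOk φ ξ →
      InSoupProg φ ⟨.E ψ ξ, [], [.Ebar ψ ξ]⟩
  | choiceEbar {ψ ξ} : ψ ∈ Insts φ → AddrOk φ ξ →
      InSoupProg φ ⟨.Ebar ψ ξ, [], [.E ψ ξ]⟩
  | conflE {ψ ξ} : ψ ∈ Insts φ → AddrOk φ ξ →
      InSoupProg φ ⟨.F, [.E ψ ξ, .Ebar ψ ξ], [.F]⟩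
  | choiceA {i ψ prems tgt ξ η} : AddrOk φ ξ → AddrOk φ η → QOk φ ψ prems tgt →
      i < prems.length →
      InSoupProg φ ⟨.A i ψ prems tgt ξ η, [.Q ψ prems tgt ξ], [.Abar i ψ prems tgt ξ η]⟩
  | choiceAbar {i ψ prems tgt ξ η} : AddrOk φ ξ → AddrOk φ η → QOk φ ψ prems tgt →
      i < prems.length →
      InSoupProg φ ⟨.Abar i ψ prems tgt ξ η, [.Q ψ prems tgt ξ], [.A i ψ prems tgt ξ η]⟩
  | quest {ψ prems tgt ξ} : AddrOk φ ξ → QOk φ ψ prems tgt →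
      InSoupProg φ ⟨.Q ψ prems tgt ξ, [.E ψ ξ, .G tgt ξ], []⟩
  | totF {ψ prems tgt ξ} : AddrOk φ ξ → QOk φ ψ prems tgt →
      InSoupProg φ ⟨.F, [.Q ψ prems tgt ξ], [.Y ψ prems tgt ξ, .F]⟩
  | totY {i ψ prems tgt ξ η} : AddrOk φ ξ → AddrOk φ η → QOk φ ψ prems tgt →
      i < prems.length →
      InSoupProg φ ⟨.Y ψ prems tgt ξ, [.A i ψ prems tgt ξ η], []⟩
  | uniqG {a b ξ} : AddrOk φ ξ → a ≠ b →
      InSoupProg φ ⟨.F, [.G a ξ, .G b ξ], [.F]⟩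

/-- The constructed program as a set of clauses. -/
def SoupProg (φ : Form) : Set (ASP.GClause PAt) := {c | InSoupProg φ c}

end MFOL

namespace MFOL

/-- The triple giving question data ψ, prems, tgt is a question asked at the
judgment addressed ξ (under the addressing J). -/
def IsQuestionAt (φ : Form) (J : Addr → Set Form × Form) (ψ : Form)
    (prems : List Form) (tgt : Form) (ξ : Addr) : Prop :=
  ψ ∈ Insts φ ∧ ψ ∈ (J ξ).1 ∧ Unfolds ψ prems tgt ∧ (J ξ).2 = tgt

/-- The judgment addressed η is an i-th answer to a question with premises
`prems` asked at the judgment addressed ξ. -/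
def AnswersAt (J : Addr → Set Form × Form) (ξ : Addr) (prems : List Form)
    (i : ℕ) (η : Addr) : Prop :=
  ∃ σ, prems[i]? = some σ ∧ (J η).2 = targetOf σ ∧
    (J ξ).1 ∪ {τ | τ ∈ premsOf σ} ⊆ (J η).1

/-- The model constructed from an addressed soup: goal, environment, question,
answer and Y atoms selected according to the soup structure; F not selected. -/
def ModelOf (φ : Form) (J : Addr → Set Form × Form) : Set PAt :=
  {x | ∃ ξ, AddrOk φ ξ ∧ (
    (∃ a, (J ξ).2 = a ∧ x = .G a ξ) ∨
    (∃ ψ, ψ ∈ Insts φ ∧ ψ ∈ (J ξ).1 ∧ x = .E ψ ξ) ∨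
    (∃ ψ, ψ ∈ Insts φ ∧ ψ ∉ (J ξ).1 ∧ x = .Ebar ψ ξ) ∨
    (∃ ψ prems tgt, IsQuestionAt φ J ψ prems tgt ξ ∧ x = .Q ψ prems tgt ξ) ∨
    (∃ i ψ prems tgt η, AddrOk φ η ∧ IsQuestionAt φ J ψ prems tgt ξ ∧
      AnswersAt J ξ prems i η ∧ x = .A i ψ prems tgt ξ η) ∨
    (∃ i ψ prems tgt η, AddrOk φ η ∧ i < prems.length ∧
      IsQuestionAt φ J ψ prems tgt ξ ∧ ¬ AnswersAt J ξ prems i η ∧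
      x = .Abar i ψ prems tgt ξ η) ∨
    (∃ ψ prems tgt, IsQuestionAt φ J ψ prems tgt ξ ∧
      (∃ i η, AddrOk φ η ∧ AnswersAt J ξ prems i η) ∧ x = .Y ψ prems tgt ξ))}

end MFOL


namespace MFOL
variable {φ : Form} {J : Addr → Set Form × Form}

lemma memG {a ξ} : PAt.G a ξ ∈ ModelOf φ J ↔ AddrOk φ ξ ∧ (J ξ).2 = a := by
  simp [ModelOf]; aesop

lemma memE {ψ ξ} : PAt.E ψ ξ ∈ ModelOf φ J ↔ AddrOk φ ξ ∧ ψ ∈ Insts φ ∧ ψ ∈ (J ξ).1 := by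
  simp [ModelOf] <;> aesop

lemma memEbar {ψ ξ} : PAt.Ebar ψ ξ ∈ ModelOf φ J ↔ AddrOk φ ξ ∧ ψ ∈ Insts φ ∧ ψ ∉ (J ξ).1 := by
  simp [ModelOf] <;> aesop

lemma memQ {ψ prems tgt ξ} : PAt.Q ψ prems tgt ξ ∈ ModelOf φ J ↔ AddrOk φ ξ ∧ IsQuestionAt φ J ψ prems tgt ξ := by
  simp [ModelOf] <;> aesop

lemma memA {i ψ prems tgt ξ η} : PAt.A i ψ prems tgt ξ η ∈ ModelOf φ J ↔ AddrOk φ ξ ∧ AddrOk φ η ∧ IsQuestionAt φ J ψ prems tgt ξ ∧ AnswersAt J ξ prems i η := by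
  simp [ModelOf] <;> aesop

lemma memAbar {i ψ prems tgt ξ η} : PAt.Abar i ψ prems tgt ξ η ∈ ModelOf φ J ↔ AddrOk φ ξ ∧ AddrOk φ η ∧ i < prems.length ∧ IsQuestionAt φ J ψ prems tgt ξ ∧ ¬ AnswersAt J ξ prems i η := by
  simp [ModelOf] <;> aesop

lemma memY {ψ prems tgt ξ} : PAt.Y ψ prems tgt ξ ∈ ModelOf φ J ↔ AddrOk φ ξ ∧ IsQuestionAt φ J ψ prems tgt ξ ∧ ∃ i η, AddrOk φ η ∧ AnswersAt J ξ prems i η := by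
  simp only [ModelOf, Set.mem_setOf_eq]
  constructor
  · rintro ⟨ξ', h1, h⟩
    rcases h with ⟨a,ha,he⟩|⟨a,_,_,he⟩|⟨a,_,_,he⟩|⟨a,b,c,_,he⟩|⟨a,b,c,e,f,_,_,_,he⟩|⟨a,b,c,e,f,_,_,_,_,he⟩|⟨a,b,c,hq,hw,he⟩
    · cases he
    · cases he
    · cases he
    · cases he
    · cases he
    · cases he
    · cases he
      obtain ⟨i,η,h2,h3⟩ := hw
      exact ⟨h1, hq, i, η, h2, h3⟩
  · rintro ⟨h1, hq, i, η, h2, h3⟩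
    exact ⟨ξ, h1, Or.inr (Or.inr (Or.inr (Or.inr (Or.inr (Or.inr ⟨ψ, prems, tgt, hq, ⟨i,η,h2,h3⟩, rfl⟩)))))⟩

lemma memF : PAt.F ∉ ModelOf φ J := by
  simp [ModelOf]

end MFOL


lemma interp_step {α : Type} {P : Set (ASP.GClause α)} {M : Set α} {c : ASP.GClause α}
    (hc : c ∈ P) (hpos : ∀ b ∈ c.pos, b ∈ ASP.interp P M) (hneg : ∀ b ∈ c.neg, b ∉ M) :
    c.head ∈ ASP.interp P M := by
  have h : ASP.tcons P M (ASP.interp P M) = ASP.interp P M := OrderHom.map_lfp _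
  rw [← h]
  exact Or.inr ⟨c, hc, rfl, hpos, hneg⟩

/-- Given a refutation soup Z for φ in which every non-initial judgment answers
some question asked in Z (witnessed by the depth function d), together with an
addressing J of Z, the model constructed from Z is a stable model of the
program. -/
theorem stmt18 (φ : MFOL.Form) (hφ : MFOL.IsSigma1 φ)
    (Z : Set (Set MFOL.Form × MFOL.Form)) (hZ : MFOL.IsSoup φ Z)
    (J : MFOL.Addr → Set MFOL.Form × MFOL.Form)
    (hJ0 : J (MFOL.addr0 φ) = ({τ | τ ∈ MFOL.premsOf φ}, MFOL.targetOf φ))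
    (hJZ : ∀ ξ, MFOL.AddrOk φ ξ → J ξ ∈ Z)
    (hZJ : ∀ z ∈ Z, ∃ ξ, MFOL.AddrOk φ ξ ∧ J ξ = z)
    (d : MFOL.Addr → ℕ) (hd0 : d (MFOL.addr0 φ) = 0)
    (hd : ∀ ξ, MFOL.AddrOk φ ξ → ξ ≠ MFOL.addr0 φ →
      ∃ ζ ψ prems tgt i, MFOL.AddrOk φ ζ ∧ d ζ < d ξ ∧
        MFOL.IsQuestionAt φ J ψ prems tgt ζ ∧ MFOL.AnswersAt J ζ prems i ξ) :
    ASP.IsStable (MFOL.SoupProg φ) (MFOL.ModelOf φ J) := by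

  classical
  set P := MFOL.SoupProg φ with hP
  set M := MFOL.ModelOf φ J with hM
  set I := ASP.interp P M with hI
  have haddr0 : MFOL.AddrOk φ (MFOL.addr0 φ) := by
    simp [MFOL.AddrOk, MFOL.addr0]
  have hsub : ∀ ξ, MFOL.AddrOk φ ξ → (J ξ).1 ⊆ MFOL.Insts φ := fun ξ h =>
    (hZ.2.1 _ (hJZ ξ h)).1
  have hstep : ∀ c : ASP.GClause MFOL.PAt, MFOL.InSoupProg φ c →
      (∀ b ∈ c.pos, b ∈ I) → (∀ b ∈ c.neg, b ∉ M) → c.head ∈ I := by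
    intro c hc hpos hneg
    exact interp_step hc hpos hneg
  -- E atoms of the model are in I (no induction needed: choiceE has empty body)
  have hEI : ∀ ψ ξ, MFOL.AddrOk φ ξ → ψ ∈ MFOL.Insts φ → ψ ∈ (J ξ).1 →
      MFOL.PAt.E ψ ξ ∈ I := by
    intro ψ ξ hξ hins hmem
    refine hstep _ (MFOL.InSoupProg.choiceE hins hξ) (by simp) ?_
    intro b hb
    simp only [List.mem_singleton] at hb
    subst hb
    intro hcon
    exact (MFOL.memEbar.mp hcon).2.2 hmem
  -- Q atoms from G atoms
  have hQI : ∀ ψ prems tgt ξ, MFOL.AddrOk φ ξ →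
      MFOL.IsQuestionAt φ J ψ prems tgt ξ → MFOL.PAt.G tgt ξ ∈ I →
      MFOL.PAt.Q ψ prems tgt ξ ∈ I := by
    intro ψ prems tgt ξ hξ hq hG
    refine hstep _ (MFOL.InSoupProg.quest hξ ⟨hq.1, hq.2.2.1⟩) ?_ (by simp)
    intro b hb
    simp only [List.mem_cons, List.not_mem_nil, or_false] at hb
    rcases hb with rfl | rfl
    · exact hEI ψ ξ hξ hq.1 hq.2.1
    · exact hG
  -- A atoms from G atoms
  have hAI : ∀ i ψ prems tgt ξ η, MFOL.AddrOk φ ξ → MFOL.AddrOk φ η →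
      MFOL.IsQuestionAt φ J ψ prems tgt ξ → MFOL.AnswersAt J ξ prems i η →
      MFOL.PAt.G ((J ξ).2) ξ ∈ I → MFOL.PAt.A i ψ prems tgt ξ η ∈ I := by
    intro i ψ prems tgt ξ η hξ hη hq hans hG
    obtain ⟨σ, hget, htgt, hsb⟩ := hans
    have hlen : i < prems.length := (List.getElem?_eq_some_iff.mp hget).1
    refine hstep _ (MFOL.InSoupProg.choiceA hξ hη ⟨hq.1, hq.2.2.1⟩ hlen) ?_ ?_
    · intro b hb
      simp only [List.mem_singleton] at hb
      subst hb
      refine hQI ψ prems tgt ξ hξ hq ?_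
      rw [← hq.2.2.2]; exact hG
    · intro b hb
      simp only [List.mem_singleton] at hb
      subst hb
      intro hcon
      exact (MFOL.memAbar.mp hcon).2.2.2.2 ⟨σ, hget, htgt, hsb⟩
  -- G atoms, by strong induction on depth
  have hGI : ∀ n ξ, MFOL.AddrOk φ ξ → d ξ ≤ n → MFOL.PAt.G ((J ξ).2) ξ ∈ I := by
    intro n
    induction n with
    | zero =>
      intro ξ hok hdn
      by_cases hξ0 : ξ = MFOL.addr0 φ
      · subst hξ0
        have := hstep _ (MFOL.InSoupProg.initG (φ := φ)) (by simp) (by simp)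
        simpa [hJ0] using this
      · exfalso
        obtain ⟨ζ, ψ, prems, tgt, i, hζok, hdlt, hq, hans⟩ := hd ξ hok hξ0
        omega
    | succ n ih =>
      intro ξ hok hdn
      by_cases hξ0 : ξ = MFOL.addr0 φ
      · subst hξ0
        have := hstep _ (MFOL.InSoupProg.initG (φ := φ)) (by simp) (by simp)
        simpa [hJ0] using this
      · obtain ⟨ζ, ψ, prems, tgt, i, hζok, hdlt, hq, hans⟩ := hd ξ hok hξ0
        have hGζ : MFOL.PAt.G ((J ζ).2) ζ ∈ I := ih ζ hζok (by omega)
        have hA := hAI i ψ prems tgt ζ ξ hζok hok hq hans hGζ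
        obtain ⟨σ, hget, htgt, hsb⟩ := hans
        have hhead := hstep _ (MFOL.InSoupProg.propG hζok hok ⟨hq.1, hq.2.2.1⟩ hget)
          (by intro b hb; simp only [List.mem_singleton] at hb; subst hb; exact hA)
          (by simp)
        rw [htgt]
        exact hhead
  -- M ⊆ I
  have hMI : M ⊆ I := by
    intro x hx
    rcases hx with ⟨ξ, hok, hx⟩
    rcases hx with ⟨a, ha, rfl⟩ | ⟨ψ, h1, h2, rfl⟩ | ⟨ψ, h1, h2, rfl⟩ |
      ⟨ψ, prems, tgt, hq, rfl⟩ | ⟨i, ψ, prems, tgt, η, hη, hq, hans, rfl⟩ |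
      ⟨i, ψ, prems, tgt, η, hη, hlen, hq, hnans, rfl⟩ |
      ⟨ψ, prems, tgt, hq, ⟨i, η, hη, hans⟩, rfl⟩
    · rw [← ha]; exact hGI (d ξ) ξ hok le_rfl
    · exact hEI ψ ξ hok h1 h2
    · refine hstep _ (MFOL.InSoupProg.choiceEbar h1 hok) (by simp) ?_
      intro b hb
      simp only [List.mem_singleton] at hb
      subst hb
      intro hcon
      exact h2 (MFOL.memE.mp hcon).2.2
    · refine hQI ψ prems tgt ξ hok hq ?_
      rw [← hq.2.2.2]
      exact hGI (d ξ) ξ hok le_rfl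
    · exact hAI i ψ prems tgt ξ η hok hη hq hans (hGI (d ξ) ξ hok le_rfl)
    · refine hstep _ (MFOL.InSoupProg.choiceAbar hok hη ⟨hq.1, hq.2.2.1⟩ hlen) ?_ ?_
      · intro b hb
        simp only [List.mem_singleton] at hb
        subst hb
        refine hQI ψ prems tgt ξ hok hq ?_
        rw [← hq.2.2.2]
        exact hGI (d ξ) ξ hok le_rfl
      · intro b hb
        simp only [List.mem_singleton] at hb
        subst hb
        intro hcon
        exact hnans (MFOL.memA.mp hcon).2.2.2
    · refine hstep _ (MFOL.InSoupProg.totY hok hη ⟨hq.1, hq.2.2.1⟩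
        ((List.getElem?_eq_some_iff.mp hans.choose_spec.1).1)) ?_ (by simp)
      intro b hb
      simp only [List.mem_singleton] at hb
      subst hb
      exact hAI i ψ prems tgt ξ η hok hη hq hans (hGI (d ξ) ξ hok le_rfl)
  -- M is closed under the clauses (for I ⊆ M)
  have hclosed : ∀ c : ASP.GClause MFOL.PAt, MFOL.InSoupProg φ c →
      (∀ b ∈ c.pos, b ∈ M) → (∀ b ∈ c.neg, b ∉ M) → c.head ∈ M := by
    intro c hc hpos hneg
    cases hc with
    | initG =>
      exact MFOL.memG.mpr ⟨haddr0, by rw [hJ0]⟩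
    | @initE ψ hψ =>
      refine MFOL.memE.mpr ⟨haddr0, ?_, ?_⟩
      · exact hsub _ haddr0 (by rw [hJ0]; exact hψ)
      · rw [hJ0]; exact hψ
    | @initEbar ψ h1 h2 =>
      exact MFOL.memEbar.mpr ⟨haddr0, h1, by rw [hJ0]; exact h2⟩
    | @propE i ψ prems tgt ξ η τ hξ hη hqok hτ =>
      have hA := MFOL.memA.mp (hpos (MFOL.PAt.A i ψ prems tgt ξ η) (by simp))
      have hE := MFOL.memE.mp (hpos (MFOL.PAt.E τ ξ) (by simp))
      obtain ⟨σ, hget, htgt, hsb⟩ := hA.2.2.2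
      exact MFOL.memE.mpr ⟨hη, hτ, hsb (Or.inl hE.2.2)⟩
    | @propD i ψ prems tgt ξ η σ τ hξ hη hqok hget hτ =>
      have hA := MFOL.memA.mp (hpos (MFOL.PAt.A i ψ prems tgt ξ η) (by simp))
      obtain ⟨σ', hget', htgt, hsb⟩ := hA.2.2.2
      have hσ : σ' = σ := by rw [hget] at hget'; exact (Option.some.inj hget').symm
      subst hσ
      refine MFOL.memE.mpr ⟨hη, ?_, hsb (Or.inr hτ)⟩
      exact hsub η hη (hsb (Or.inr hτ))
    | @propG i ψ prems tgt ξ η σ hξ hη hqok hget =>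
      have hA := MFOL.memA.mp (hpos (MFOL.PAt.A i ψ prems tgt ξ η) (by simp))
      obtain ⟨σ', hget', htgt, hsb⟩ := hA.2.2.2
      have hσ : σ' = σ := by rw [hget] at hget'; exact (Option.some.inj hget').symm
      subst hσ
      exact MFOL.memG.mpr ⟨hη, htgt.symm ▸ rfl⟩
    | @choiceE ψ ξ hins hξ =>
      have hnb : MFOL.PAt.Ebar ψ ξ ∉ M := hneg (MFOL.PAt.Ebar ψ ξ) (by simp)
      refine MFOL.memE.mpr ⟨hξ, hins, ?_⟩
      by_contra hcon
      exact hnb (MFOL.memEbar.mpr ⟨hξ, hins, hcon⟩)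
    | @choiceEbar ψ ξ hins hξ =>
      have hnb : MFOL.PAt.E ψ ξ ∉ M := hneg (MFOL.PAt.E ψ ξ) (by simp)
      refine MFOL.memEbar.mpr ⟨hξ, hins, ?_⟩
      intro hcon
      exact hnb (MFOL.memE.mpr ⟨hξ, hins, hcon⟩)
    | @conflE ψ ξ hins hξ =>
      have h1 := MFOL.memE.mp (hpos (MFOL.PAt.E ψ ξ) (by simp))
      have h2 := MFOL.memEbar.mp (hpos (MFOL.PAt.Ebar ψ ξ) (by simp))
      exact absurd h1.2.2 h2.2.2
    | @choiceA i ψ prems tgt ξ η hξ hη hqok hlen =>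
      have hQm := MFOL.memQ.mp (hpos (MFOL.PAt.Q ψ prems tgt ξ) (by simp))
      have hnb : MFOL.PAt.Abar i ψ prems tgt ξ η ∉ M := hneg (MFOL.PAt.Abar i ψ prems tgt ξ η) (by simp)
      refine MFOL.memA.mpr ⟨hξ, hη, hQm.2, ?_⟩
      by_contra hcon
      exact hnb (MFOL.memAbar.mpr ⟨hξ, hη, hlen, hQm.2, hcon⟩)
    | @choiceAbar i ψ prems tgt ξ η hξ hη hqok hlen =>
      have hQm := MFOL.memQ.mp (hpos (MFOL.PAt.Q ψ prems tgt ξ) (by simp))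
      have hnb : MFOL.PAt.A i ψ prems tgt ξ η ∉ M := hneg (MFOL.PAt.A i ψ prems tgt ξ η) (by simp)
      refine MFOL.memAbar.mpr ⟨hξ, hη, hlen, hQm.2, ?_⟩
      intro hcon
      exact hnb (MFOL.memA.mpr ⟨hξ, hη, hQm.2, hcon⟩)
    | @quest ψ prems tgt ξ hξ hqok =>
      have hE := MFOL.memE.mp (hpos (MFOL.PAt.E ψ ξ) (by simp))
      have hG := MFOL.memG.mp (hpos (MFOL.PAt.G tgt ξ) (by simp))
      exact MFOL.memQ.mpr ⟨hξ, hqok.1, hE.2.2, hqok.2, hG.2⟩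
    | @totF ψ prems tgt ξ hξ hqok =>
      exfalso
      have hQm := MFOL.memQ.mp (hpos (MFOL.PAt.Q ψ prems tgt ξ) (by simp))
      obtain ⟨hins, hmem, hunf, htgt⟩ := hQm.2
      have hzq := hZ.2.2 (J ξ) (hJZ ξ hξ) ψ hmem prems (htgt ▸ hunf)
      obtain ⟨σ, hσmem, z, hzZ, hz2, hzsub⟩ := hzq
      obtain ⟨η, hηok, hJη⟩ := hZJ z hzZ
      obtain ⟨i, hget⟩ : ∃ i, prems[i]? = some σ := by
        obtain ⟨n, hn⟩ := List.mem_iff_get.mp hσmem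
        exact ⟨n.val, by rw [List.getElem?_eq_getElem n.2]; exact congrArg some hn⟩
      have hans : MFOL.AnswersAt J ξ prems i η :=
        ⟨σ, hget, by rw [hJη]; exact hz2, by rw [hJη]; exact hzsub⟩
      have hY : MFOL.PAt.Y ψ prems tgt ξ ∈ M :=
        MFOL.memY.mpr ⟨hξ, ⟨hins, hmem, hunf, htgt⟩, i, η, hηok, hans⟩
      exact hneg (MFOL.PAt.Y ψ prems tgt ξ) (by simp) hY
    | @totY i ψ prems tgt ξ η hξ hη hqok hlen =>
      have hA := MFOL.memA.mp (hpos (MFOL.PAt.A i ψ prems tgt ξ η) (by simp))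
      exact MFOL.memY.mpr ⟨hξ, hA.2.2.1, i, η, hη, hA.2.2.2⟩
    | @uniqG a b ξ hξ hne =>
      have h1 := MFOL.memG.mp (hpos (MFOL.PAt.G a ξ) (by simp))
      have h2 := MFOL.memG.mp (hpos (MFOL.PAt.G b ξ) (by simp))
      exact absurd (h1.2.symm.trans h2.2) hne
  -- I ⊆ M via lfp_le
  have hIM : I ⊆ M := by
    have hle : ASP.tcons P M M ≤ M := by
      intro a ha
      rcases ha with ha | ⟨c, hc, hh, hpos, hneg⟩
      · exact ha
      · rw [← hh]
        exact hclosed c hc hpos hneg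
    exact OrderHom.lfp_le _ hle
  exact Set.Subset.antisymm hMI hIM
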